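/- arXiv:2502.16639 — 2 statements merged into one kernel-verified Lean document; each statement's English description precedes it below -/
import Mathlib

section
/- Let m > 1 be fixed and A_c^{nm} = (1/2)·[ ((2^{2+n}−1)(1+n)ζ(n+2)) / ((2^{2+m}−1)(1+m)ζ(m+2)) ]^{1/(n−m)}. Then lim_{n→m^+} A_c^{nm} = exp( ln 2/(2^{2+m}−1) + 1/(1+m) + ζ′(m+2)/ζ(m+2) ). -/
open Real Filter

/-- The Riemann zeta function `ζ(s) = Σ_{j=1}^∞ j^{-s}` for real `s > 1`. -/
noncomputable def rzeta (s : ℝ) : ℝ := ∑' j : ℕ, ((j : ℝ) + 1) ^ (-s)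

lemma rzeta_summable {s : ℝ} (hs : 1 < s) :
    Summable (fun j : ℕ => ((j : ℝ) + 1) ^ (-s)) := by
  have h : Summable (fun n : ℕ => (n : ℝ) ^ (-s)) :=
    Real.summable_nat_rpow.mpr (by linarith)
  have := (summable_nat_add_iff 1).mpr h
  simpa using this

lemma rzeta_pos {s : ℝ} (hs : 1 < s) : 0 < rzeta s := by
  have h0 := Summable.le_tsum (rzeta_summable hs) 0 (fun j _ => by positivity)
  simp only [Nat.cast_zero, zero_add, Real.one_rpow] at h0
  exact lt_of_lt_of_le one_pos h0

lemma rzeta_eq_complex {s : ℝ} (hs : 1 < s) : (rzeta s : ℂ) = riemannZeta s := by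
  rw [rzeta, Complex.ofReal_tsum,
    zeta_eq_tsum_one_div_nat_add_one_cpow (by simpa using hs)]
  refine tsum_congr fun j => ?_
  have hb : (0 : ℝ) ≤ (j : ℝ) + 1 := by positivity
  rw [Complex.ofReal_cpow hb]
  push_cast
  rw [Complex.cpow_neg, one_div]

lemma rzeta_hasDerivAt {s : ℝ} (hs : 1 < s) :
    HasDerivAt rzeta ((deriv riemannZeta (s : ℂ)).re) s := by
  have hne : (s : ℂ) ≠ 1 := by
    simp only [ne_eq, Complex.ofReal_eq_one]; exact ne_of_gt hs
  have hd : HasDerivAt riemannZeta (deriv riemannZeta (s : ℂ)) (s : ℂ) :=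
    (differentiableAt_riemannZeta hne).hasDerivAt
  have h1 : HasDerivAt (fun x : ℝ => (riemannZeta x).re)
      ((deriv riemannZeta (s : ℂ)).re) s := hd.real_of_complex
  refine h1.congr_of_eventuallyEq ?_
  filter_upwards [Ioi_mem_nhds hs] with t ht
  have := rzeta_eq_complex (Set.mem_Ioi.mp ht)
  rw [← this, Complex.ofReal_re]

/-- For fixed `m > 1`, the transition point
`A_c^{nm} = (1/2)·[((2^{2+n}−1)(1+n)ζ(n+2)) / ((2^{2+m}−1)(1+m)ζ(m+2))]^{1/(n−m)}`
satisfies `lim_{n→m⁺} A_c^{nm} = exp(ln 2/(2^{2+m}−1) + 1/(1+m) + ζ′(m+2)/ζ(m+2))`. -/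
theorem Ac_tendsto_as_n_to_m
    (m : ℝ) (hm : 1 < m) :
    Tendsto
      (fun n : ℝ =>
        (1 / 2) * (((2 ^ (2 + n) - 1) * (1 + n) * rzeta (n + 2)) /
            ((2 ^ (2 + m) - 1) * (1 + m) * rzeta (m + 2))) ^ (1 / (n - m)))
      (nhdsWithin m (Set.Ioi m))
      (nhds (Real.exp (Real.log 2 / (2 ^ (2 + m) - 1) + 1 / (1 + m) +
        deriv rzeta (m + 2) / rzeta (m + 2)))) := by
  -- positivity facts
  have hpow : ∀ t : ℝ, 1 < t → (1 : ℝ) < 2 ^ (2 + t) := by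
    intro t ht
    exact (Real.one_lt_rpow_iff_of_pos (by norm_num)).mpr
      (Or.inl ⟨by norm_num, by linarith⟩)
  have h1m : (0 : ℝ) < 2 ^ (2 + m) - 1 := by linarith [hpow m hm]
  have h2m : (0 : ℝ) < 1 + m := by linarith
  have h3m : (0 : ℝ) < rzeta (m + 2) := rzeta_pos (by linarith)
  -- the log function
  set L : ℝ → ℝ := fun t =>
    Real.log (2 ^ (2 + t) - 1) + Real.log (1 + t) + Real.log (rzeta (t + 2)) with hL
  -- derivative of rzeta at m+2
  have hr : HasDerivAt rzeta ((deriv riemannZeta ((m + 2 : ℝ) : ℂ)).re) (m + 2) :=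
    rzeta_hasDerivAt (by linarith)
  have hdr : deriv rzeta (m + 2) = (deriv riemannZeta ((m + 2 : ℝ) : ℂ)).re := hr.deriv
  set T : ℝ := Real.log 2 / (2 ^ (2 + m) - 1) + 1 / (1 + m) +
    deriv rzeta (m + 2) / rzeta (m + 2) with hT
  -- derivative of L at m
  have hLder : HasDerivAt L (T + Real.log 2) m := by
    have hA : HasDerivAt (fun t : ℝ => (2 : ℝ) ^ (2 + t) - 1)
        (2 ^ (2 + m) * Real.log 2 * 1) m := by
      have := (Real.hasStrictDerivAt_const_rpow (show (0:ℝ) < 2 by norm_num)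
        (2 + m)).hasDerivAt
      exact (this.comp m ((hasDerivAt_id m).const_add 2)).sub_const 1
    have hA' : HasDerivAt (fun t : ℝ => Real.log ((2 : ℝ) ^ (2 + t) - 1))
        ((2 ^ (2 + m) * Real.log 2 * 1) / (2 ^ (2 + m) - 1)) m :=
      hA.log (ne_of_gt h1m)
    have hB : HasDerivAt (fun t : ℝ => Real.log (1 + t)) (1 / (1 + m)) m :=
      ((hasDerivAt_id m).const_add 1).log (ne_of_gt h2m)
    have hC : HasDerivAt (fun t : ℝ => rzeta (t + 2))
        ((deriv riemannZeta ((m + 2 : ℝ) : ℂ)).re * 1) m :=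
      by have := hr.comp m ((hasDerivAt_id m).add_const 2); exact this
    have hC' : HasDerivAt (fun t : ℝ => Real.log (rzeta (t + 2)))
        (((deriv riemannZeta ((m + 2 : ℝ) : ℂ)).re * 1) / rzeta (m + 2)) m :=
      hC.log (ne_of_gt h3m)
    have := (hA'.add hB).add hC'
    refine this.congr_deriv ?_
    rw [hT, hdr]
    field_simp
    ring
  -- slope convergence
  have hslope : Tendsto (slope L m) (nhdsWithin m (Set.Ioi m)) (nhds (T + Real.log 2)) := by
    refine (hasDerivAt_iff_tendsto_slope.mp hLder).mono_left ?_
    exact nhdsWithin_mono m (fun x hx => ne_of_gt hx)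
  have htend : Tendsto (fun n : ℝ => (1 / 2 : ℝ) * Real.exp (slope L m n))
      (nhdsWithin m (Set.Ioi m)) (nhds ((1 / 2) * Real.exp (T + Real.log 2))) :=
    (Real.continuous_exp.continuousAt.tendsto.comp hslope).const_mul _
  -- eventual equality
  have heq : (fun n : ℝ => (1 / 2 : ℝ) * Real.exp (slope L m n))
      =ᶠ[nhdsWithin m (Set.Ioi m)]
      (fun n : ℝ =>
        (1 / 2) * (((2 ^ (2 + n) - 1) * (1 + n) * rzeta (n + 2)) /
            ((2 ^ (2 + m) - 1) * (1 + m) * rzeta (m + 2))) ^ (1 / (n - m))) := by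
    filter_upwards [self_mem_nhdsWithin] with n hn
    have hnm : m < n := Set.mem_Ioi.mp hn
    have h1n : (0 : ℝ) < 2 ^ (2 + n) - 1 := by linarith [hpow n (by linarith)]
    have h2n : (0 : ℝ) < 1 + n := by linarith
    have h3n : (0 : ℝ) < rzeta (n + 2) := rzeta_pos (by linarith)
    have hXn : (0 : ℝ) < (2 ^ (2 + n) - 1) * (1 + n) * rzeta (n + 2) := by positivity
    have hXm : (0 : ℝ) < (2 ^ (2 + m) - 1) * (1 + m) * rzeta (m + 2) := by positivity
    have hq : (0 : ℝ) < ((2 ^ (2 + n) - 1) * (1 + n) * rzeta (n + 2)) /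
        ((2 ^ (2 + m) - 1) * (1 + m) * rzeta (m + 2)) := div_pos hXn hXm
    rw [Real.rpow_def_of_pos hq]
    congr 1
    rw [Real.log_div (ne_of_gt hXn) (ne_of_gt hXm),
      Real.log_mul (by positivity) (ne_of_gt h3n),
      Real.log_mul (ne_of_gt h1n) (ne_of_gt h2n),
      Real.log_mul (by positivity) (ne_of_gt h3m),
      Real.log_mul (ne_of_gt h1m) (ne_of_gt h2m)]
    rw [slope_def_field, hL]
    field_simp
  have hfin : (1 / 2 : ℝ) * Real.exp (T + Real.log 2) = Real.exp T := by
    rw [Real.exp_add, Real.exp_log (by norm_num : (0:ℝ) < 2)]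
    ring
  rw [hT] at hfin
  exact hfin ▸ (htend.congr' heq)
end

section
/- Let n > m > 1 be real and A₀ > 0, and suppose Δ : (A₀,∞) → (1,∞) satisfies for every A > A₀ the stationarity equation A^{m−n} = 2^{n−m}·[ ζ(m+1, 1−δ(A)) − ζ(m+1, δ(A)) ] / [ ζ(n+1, 1−δ(A)) − ζ(n+1, δ(A)) ], where δ(A) = 1/(1+Δ(A)). Then δ(A) → 0 as A → ∞, and Δ(A) = 2A − 1 + o(1) as A → ∞, i.e. lim_{A→∞} ( Δ(A) − 2A + 1 ) = 0, regardless of the values of the Lennard-Jones parameters (n,m). -/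
open Real Filter

/-- The Hurwitz zeta function `ζ(s,q) = Σ_{j=0}^∞ (j+q)^{-s}` for real `s > 1`, `q > 0`. -/
noncomputable def hzeta (s q : ℝ) : ℝ := ∑' j : ℕ, ((j : ℝ) + q) ^ (-s)

lemma summable_hz {s q : ℝ} (hs : 1 < s) (hq : 0 < q) :
    Summable (fun j : ℕ => ((j : ℝ) + q) ^ (-s)) := by
  have h := (Real.summable_one_div_nat_add_rpow q s).mpr hs
  refine h.congr fun j => ?_
  have hj : (0:ℝ) < (j:ℝ) + q := by positivity
  rw [abs_of_pos hj, Real.rpow_neg hj.le, one_div]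

lemma rpow_neg_anti {x y s : ℝ} (hx : 0 < x) (hxy : x ≤ y) (hs : 0 ≤ s) :
    y ^ (-s) ≤ x ^ (-s) :=
  Real.rpow_le_rpow_of_nonpos hx hxy (neg_nonpos.mpr hs)

lemma hzeta_anti {s q q' : ℝ} (hs : 1 < s) (hq : 0 < q) (hqq : q ≤ q') :
    hzeta s q' ≤ hzeta s q := by
  refine Summable.tsum_le_tsum (fun j => ?_) (summable_hz hs (lt_of_lt_of_le hq hqq)) (summable_hz hs hq)
  exact rpow_neg_anti (by positivity) (by linarith) (by linarith)

lemma hzeta_split {s q : ℝ} (hs : 1 < s) (hq : 0 < q) :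
    hzeta s q = q ^ (-s) + hzeta s (q + 1) := by
  have h := summable_hz hs hq
  rw [hzeta, Summable.tsum_eq_zero_add h]
  congr 1
  · norm_num
  · rw [hzeta]
    refine tsum_congr fun j => ?_
    push_cast
    ring_nf

lemma key_ineq {v s t : ℝ} (hv0 : 0 < v) (hv1 : v ≤ 1) (hs : 0 < s) (hst : s ≤ t) :
    s / t * (1 - v ^ t) ≤ 1 - v ^ s := by
  have ht : 0 < t := lt_of_lt_of_le hs hst
  have hl : s / t ≤ 1 := by rw [div_le_one ht]; exact hst
  have hl0 : 0 < s / t := div_pos hs ht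
  have hconv := convexOn_exp.2 (Set.mem_univ (0:ℝ)) (Set.mem_univ (Real.log v * t))
    (by linarith : (0:ℝ) ≤ 1 - s / t) hl0.le (by ring)
  have h1 : (1 - s / t) • (0:ℝ) + (s / t) • (Real.log v * t) = Real.log v * s := by
    rw [smul_eq_mul, smul_eq_mul, mul_zero, zero_add, div_mul_eq_mul_div, div_eq_iff ht.ne']
    ring
  rw [h1] at hconv
  have hvs : v ^ s = Real.exp (Real.log v * s) := Real.rpow_def_of_pos hv0 s
  have hvt : v ^ t = Real.exp (Real.log v * t) := Real.rpow_def_of_pos hv0 t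
  rw [← hvs, ← hvt, Real.exp_zero, smul_eq_mul, smul_eq_mul] at hconv
  nlinarith [hconv]

-- termwise inequality
lemma term_ineq {d s t x y : ℝ} (hd : 0 < d) (hx : d ≤ x) (hxy : x ≤ y)
    (hs : 0 < s) (hst : s ≤ t) :
    s / t * d ^ (t - s) * (x ^ (-t) - y ^ (-t)) ≤ x ^ (-s) - y ^ (-s) := by
  have hx0 : 0 < x := lt_of_lt_of_le hd hx
  have hy0 : 0 < y := lt_of_lt_of_le hx0 hxy
  set v : ℝ := x / y with hv
  have hv0 : 0 < v := div_pos hx0 hy0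
  have hv1 : v ≤ 1 := (div_le_one hy0).mpr hxy
  have hys : y ^ (-s) = x ^ (-s) * v ^ s := by
    rw [hv, Real.div_rpow hx0.le hy0.le, Real.rpow_neg hx0.le, Real.rpow_neg hy0.le]
    field_simp
  have hyt : y ^ (-t) = x ^ (-t) * v ^ t := by
    rw [hv, Real.div_rpow hx0.le hy0.le, Real.rpow_neg hx0.le, Real.rpow_neg hy0.le]
    field_simp
  have hxts : x ^ (t - s) * x ^ (-t) = x ^ (-s) := by
    rw [← Real.rpow_add hx0]; ring_nf
  have hkey := key_ineq hv0 hv1 hs hst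
  -- x^(-s) - y^(-s) = x^(-s) (1 - v^s) ≥ (s/t) x^(-s) (1 - v^t)
  have h1 : s / t * (x ^ (-s) * (1 - v ^ t)) ≤ x ^ (-s) - y ^ (-s) := by
    rw [hys]
    have := mul_le_mul_of_nonneg_left hkey (le_of_lt (Real.rpow_pos_of_pos hx0 (-s)))
    calc s / t * (x ^ (-s) * (1 - v ^ t)) = x ^ (-s) * (s / t * (1 - v ^ t)) := by ring
    _ ≤ x ^ (-s) * (1 - v ^ s) := this
    _ = x ^ (-s) - x ^ (-s) * v ^ s := by ring
  -- and x^(-s) (1 - v^t) = x^(t-s) (x^(-t) - y^(-t)) ≥ d^(t-s) (x^(-t)-y^(-t))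
  have h2 : x ^ (-s) * (1 - v ^ t) = x ^ (t - s) * (x ^ (-t) - y ^ (-t)) := by
    have e : x ^ (t - s) * (x ^ (-t) - y ^ (-t))
        = x ^ (t-s) * x ^ (-t) - (x ^ (t-s) * x ^ (-t)) * v ^ t := by rw [hyt]; ring
    rw [e, hxts]; ring
  have hterm : 0 ≤ x ^ (-t) - y ^ (-t) := by
    have := Real.rpow_le_rpow_of_nonpos hx0 hxy (neg_nonpos.mpr (by linarith : (0:ℝ) ≤ t))
    linarith
  have h3 : d ^ (t - s) * (x ^ (-t) - y ^ (-t)) ≤ x ^ (t - s) * (x ^ (-t) - y ^ (-t)) :=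
    mul_le_mul_of_nonneg_right (Real.rpow_le_rpow hd.le hx (by linarith)) hterm
  have hst0 : 0 ≤ s / t := (div_pos hs (lt_of_lt_of_le hs hst)).le
  calc s / t * d ^ (t - s) * (x ^ (-t) - y ^ (-t))
      = s / t * (d ^ (t - s) * (x ^ (-t) - y ^ (-t))) := by ring
    _ ≤ s / t * (x ^ (t - s) * (x ^ (-t) - y ^ (-t))) := mul_le_mul_of_nonneg_left h3 hst0
    _ = s / t * (x ^ (-s) * (1 - v ^ t)) := by rw [h2]
    _ ≤ x ^ (-s) - y ^ (-s) := h1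

-- upper bound:  N := hzeta s d - hzeta s (1-d) ≤ d^(-s)
lemma N_le {s d : ℝ} (hs : 1 < s) (hd0 : 0 < d) (hd : d < 1/2) :
    hzeta s d - hzeta s (1 - d) ≤ d ^ (-s) := by
  have h1 : hzeta s d = d ^ (-s) + hzeta s (d + 1) := hzeta_split hs hd0
  have h2 : hzeta s (d + 1) ≤ hzeta s (1 - d) := hzeta_anti hs (by linarith) (by linarith)
  linarith

-- lower bound: d^(-s) - (1-d)^(-s) ≤ N
lemma N_ge {s d : ℝ} (hs : 1 < s) (hd0 : 0 < d) (hd : d < 1/2) :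
    d ^ (-s) - (1 - d) ^ (-s) ≤ hzeta s d - hzeta s (1 - d) := by
  have h1 : hzeta s d = d ^ (-s) + hzeta s (d + 1) := hzeta_split hs hd0
  have h2 : hzeta s (1 - d) = (1 - d) ^ (-s) + hzeta s (1 - d + 1) :=
    hzeta_split hs (by linarith)
  have h3 : hzeta s (1 - d + 1) ≤ hzeta s (d + 1) := hzeta_anti hs (by linarith) (by linarith)
  linarith

lemma D_pos {s d : ℝ} (hs : 1 < s) (hd0 : 0 < d) (hd : d < 1/2) :
    0 < hzeta s d - hzeta s (1 - d) := by
  refine lt_of_lt_of_le ?_ (N_ge hs hd0 hd)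
  have : (1 - d) ^ (-s) < d ^ (-s) :=
    Real.rpow_lt_rpow_of_neg hd0 (by linarith) (by linarith)
  linarith

-- key comparison: (s/t) d^(t-s) * (hzeta t d - hzeta t (1-d)) ≤ hzeta s d - hzeta s (1-d)
lemma ND_compare {s t d : ℝ} (hs : 1 < s) (hst : s ≤ t) (hd0 : 0 < d) (hd : d < 1/2) :
    s / t * d ^ (t - s) * (hzeta t d - hzeta t (1 - d)) ≤ hzeta s d - hzeta s (1 - d) := by
  have ht : 1 < t := lt_of_lt_of_le hs hst
  have h1d : (0:ℝ) < 1 - d := by linarith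
  have Ssd := summable_hz hs hd0
  have Ss1 := summable_hz hs h1d
  have Std := summable_hz ht hd0
  have St1 := summable_hz ht h1d
  have hN : hzeta s d - hzeta s (1 - d)
      = ∑' j : ℕ, (((j:ℝ) + d) ^ (-s) - ((j:ℝ) + (1 - d)) ^ (-s)) :=
    (Summable.tsum_sub Ssd Ss1).symm
  have hD : hzeta t d - hzeta t (1 - d)
      = ∑' j : ℕ, (((j:ℝ) + d) ^ (-t) - ((j:ℝ) + (1 - d)) ^ (-t)) :=
    (Summable.tsum_sub Std St1).symm
  rw [hN, hD, ← tsum_mul_left]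
  refine Summable.tsum_le_tsum (fun j => ?_) ((Std.sub St1).mul_left _) (Ssd.sub Ss1)
  exact term_ineq hd0 (by linarith [Nat.cast_nonneg (α := ℝ) j] : d ≤ (j:ℝ) + d)
    (by linarith : (j:ℝ) + d ≤ (j:ℝ) + (1 - d)) (by linarith) hst

-- 1 - (1-x)^p ≤ max p 1 * x   for x ∈ [0,1], p > 0
lemma one_sub_rpow_le {x p : ℝ} (hx0 : 0 ≤ x) (hx1 : x ≤ 1) (hp : 0 < p) :
    1 - (1 - x) ^ p ≤ max p 1 * x := by
  set q := max p 1 with hq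
  have hq1 : 1 ≤ q := le_max_right _ _
  rcases eq_or_lt_of_le hx1 with h | h
  · rw [h]
    simp only [sub_self, Real.zero_rpow hp.ne', mul_one, sub_zero]
    linarith
  · have h0 : 0 < 1 - x := by linarith
    have h1 : (1 - x) ^ q ≤ (1 - x) ^ p :=
      Real.rpow_le_rpow_of_exponent_ge h0 (by linarith) (le_max_left _ _)
    have h2 : 1 + q * (-x) ≤ (1 + (-x)) ^ q :=
      one_add_mul_self_le_rpow_one_add (by linarith) hq1
    have h3 : (1 : ℝ) + -x = 1 - x := by ring
    rw [h3] at h2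
    nlinarith

-- (1-y)^(-p) ≤ 1 + 2^(max p 1 + 1) * y  for y ∈ [0,1/2], p > 0
lemma inv_rpow_le {y p : ℝ} (hy0 : 0 ≤ y) (hy : y ≤ 1/2) (hp : 0 < p) :
    (1 - y) ^ (-p) ≤ 1 + 2 ^ (max p 1 + 1) * y := by
  set q := max p 1 with hq
  have hq1 : 1 ≤ q := le_max_right _ _
  have h0 : (0:ℝ) < 1 - y := by linarith
  set a : ℝ := (1 - y)⁻¹ with ha
  have ha1 : 1 ≤ a := by
    rw [ha, le_inv_comm₀ one_pos h0]; linarith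
  have ha2 : a ≤ 2 := by
    rw [ha, inv_le_comm₀ h0 two_pos]; linarith
  have e1 : (1 - y) ^ (-p) = a ^ p := by
    rw [ha, Real.inv_rpow h0.le, Real.rpow_neg h0.le]
  have e2 : a ^ p ≤ a ^ q := Real.rpow_le_rpow_of_exponent_le ha1 (le_max_left _ _)
  -- chord bound on [1,2] for convex a^q
  have hchord : a ^ q ≤ 1 + (2 ^ q - 1) * (a - 1) := by
    have hc := (convexOn_rpow (le_max_right p 1)).2 (Set.mem_Ici.mpr zero_le_one)
      (Set.mem_Ici.mpr (by norm_num : (0:ℝ) ≤ 2))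
      (by linarith : (0:ℝ) ≤ 2 - a) (by linarith : (0:ℝ) ≤ a - 1) (by ring)
    have hcomb : (2 - a) • (1:ℝ) + (a - 1) • (2:ℝ) = a := by
      simp only [smul_eq_mul]; ring
    rw [hcomb] at hc
    simp only [smul_eq_mul, Real.one_rpow] at hc
    calc a ^ q ≤ (2 - a) * 1 + (a - 1) * 2 ^ q := hc
      _ = 1 + (2 ^ q - 1) * (a - 1) := by ring
  have ha3 : a - 1 ≤ 2 * y := by
    have hd : (1:ℝ) / (1 - y) ≤ 1 + 2 * y := by
      rw [div_le_iff₀ h0]; nlinarith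
    rw [ha, ← one_div]; linarith
  have h2q : (1:ℝ) ≤ 2 ^ q := Real.one_le_rpow one_le_two (by linarith)
  have h2q1 : (2:ℝ) ^ (q + 1) = 2 ^ q * 2 := by
    rw [Real.rpow_add two_pos, Real.rpow_one]
  calc (1 - y) ^ (-p) = a ^ p := e1
    _ ≤ a ^ q := e2
    _ ≤ 1 + (2 ^ q - 1) * (a - 1) := hchord
    _ ≤ 1 + (2 ^ q - 1) * (2 * y) := by nlinarith
    _ ≤ 1 + 2 ^ (q + 1) * y := by rw [h2q1]; nlinarith

lemma core (n m A d : ℝ) (hm : 1 < m) (hnm : m < n) (hA : 0 < A)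
    (hd0 : 0 < d) (hd : d < 1/2)
    (hD_eq : hzeta (n+1) d - hzeta (n+1) (1-d)
      = (2*A) ^ (n-m) * (hzeta (m+1) d - hzeta (m+1) (1-d))) :
    d * (2*A) ≤ ((n+1)/(m+1)) ^ (n-m)⁻¹ ∧
    (d ≤ 1/3 → |1/d - 2*A| ≤
      max (max (n-m)⁻¹ 1 * 2 ^ (n+1)) (2 ^ (max (n-m)⁻¹ 1 + 1) * 2 ^ (m+1)) * d ^ m) := by
  have hρ : 0 < n - m := by linarith
  have hρinv : 0 < (n-m)⁻¹ := inv_pos.mpr hρ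
  have ha0 : (0:ℝ) < 2 * A := by linarith
  have h1d : (0:ℝ) < 1 - d := by linarith
  have haρ : (0:ℝ) < (2*A) ^ (n-m) := Real.rpow_pos_of_pos ha0 _
  set N := hzeta (m+1) d - hzeta (m+1) (1-d) with hN
  set D := hzeta (n+1) d - hzeta (n+1) (1-d) with hD
  have hm1 : (1:ℝ) < m + 1 := by linarith
  have hn1 : (1:ℝ) < n + 1 := by linarith
  have hN0 : 0 < N := D_pos hm1 hd0 hd
  have hNle : N ≤ d ^ (-(m+1)) := N_le hm1 hd0 hd
  have hNge : d ^ (-(m+1)) - (1-d) ^ (-(m+1)) ≤ N := N_ge hm1 hd0 hd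
  have hDle : D ≤ d ^ (-(n+1)) := N_le hn1 hd0 hd
  have hDge : d ^ (-(n+1)) - (1-d) ^ (-(n+1)) ≤ D := N_ge hn1 hd0 hd
  have hda0 : (0:ℝ) ≤ d * (2*A) := by positivity
  have hmulρ : (d * (2*A)) ^ (n-m) = d ^ (n-m) * (2*A) ^ (n-m) :=
    Real.mul_rpow hd0.le ha0.le
  have hdmA : d * (2*A) = ((d * (2*A)) ^ (n-m)) ^ (n-m)⁻¹ :=
    (Real.rpow_rpow_inv hda0 hρ.ne').symm
  -- part (a)
  have ha : (m+1)/(n+1) * (d * (2*A)) ^ (n-m) ≤ 1 := by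
    have hcmp : (m+1) / (n+1) * d ^ (n-m) * D ≤ N := by
      have h := ND_compare hm1 (by linarith : m+1 ≤ n+1) hd0 hd
      have e : n + 1 - (m + 1) = n - m := by ring
      rwa [e] at h
    rw [hD_eq] at hcmp
    have h3 : ((m+1)/(n+1) * (d * (2*A)) ^ (n-m)) * N ≤ 1 * N := by
      rw [one_mul, hmulρ]
      calc (m+1)/(n+1) * (d ^ (n-m) * (2*A) ^ (n-m)) * N
          = (m+1)/(n+1) * d ^ (n-m) * ((2*A) ^ (n-m) * N) := by ring
        _ ≤ N := hcmp
    exact le_of_mul_le_mul_right h3 hN0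
  have hc0 : (0:ℝ) < (m+1)/(n+1) := by positivity
  have haX : (d * (2*A)) ^ (n-m) ≤ (n+1)/(m+1) := by
    have h1 : (d * (2*A)) ^ (n-m) ≤ 1 / ((m+1)/(n+1)) := by
      rw [le_div_iff₀ hc0, mul_comm]; exact ha
    rwa [one_div_div] at h1
  have parta : d * (2*A) ≤ ((n+1)/(m+1)) ^ (n-m)⁻¹ := by
    rw [hdmA]
    exact Real.rpow_le_rpow (Real.rpow_nonneg hda0 _) haX hρinv.le
  refine ⟨parta, fun hd3 => ?_⟩
  -- setup for part (b)/(c)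
  set g : ℝ := d / (1 - d) with hg
  have hg0 : 0 < g := div_pos hd0 h1d
  have hg1 : g ≤ 1 := (div_le_one h1d).mpr (by linarith)
  have hg12 : g ≤ 1/2 := by
    rw [hg, div_le_div_iff₀ h1d two_pos]; linarith
  have hg2d : g ≤ 2 * d := by
    rw [hg, div_le_iff₀ h1d]; nlinarith
  set q : ℝ := max (n-m)⁻¹ 1 with hq
  have hq1 : (1:ℝ) ≤ q := le_max_right _ _
  -- rpow identities
  have idT : d ^ (n+1) * d ^ (-(n+1)) = 1 := by
    rw [Real.rpow_neg hd0.le, mul_inv_cancel₀ (Real.rpow_pos_of_pos hd0 _).ne']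
  have idS : d ^ (m+1) * d ^ (-(m+1)) = 1 := by
    rw [Real.rpow_neg hd0.le, mul_inv_cancel₀ (Real.rpow_pos_of_pos hd0 _).ne']
  have gT : g ^ (n+1) = d ^ (n+1) * (1-d) ^ (-(n+1)) := by
    rw [hg, Real.div_rpow hd0.le h1d.le, Real.rpow_neg h1d.le, div_eq_mul_inv]
  have gS : g ^ (m+1) = d ^ (m+1) * (1-d) ^ (-(m+1)) := by
    rw [hg, Real.div_rpow hd0.le h1d.le, Real.rpow_neg h1d.le, div_eq_mul_inv]
  have dρ1 : d ^ (-(m+1)) * d ^ (n+1) = d ^ (n-m) := by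
    rw [← Real.rpow_add hd0]; congr 1; ring
  have dρ2 : d ^ (-(n+1)) * d ^ (m+1) = d ^ (-(n-m)) := by
    rw [← Real.rpow_add hd0]; congr 1; ring
  have idρ : d ^ (-(n-m)) * d ^ (n-m) = 1 := by
    rw [Real.rpow_neg hd0.le, inv_mul_cancel₀ (Real.rpow_pos_of_pos hd0 _).ne']
  have hdm1 : d ^ m * d = d ^ (m+1) := by
    nth_rewrite 2 [← Real.rpow_one d]
    rw [← Real.rpow_add hd0]
  have hdnm : d ^ (n+1) ≤ d ^ (m+1) :=
    Real.rpow_le_rpow_of_exponent_ge hd0 (by linarith) (by linarith)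
  -- (b): 1 - g^(n+1) ≤ (d*(2A))^(n-m)
  have hb : 1 - g ^ (n+1) ≤ (d * (2*A)) ^ (n-m) := by
    have h1 : d ^ (-(n+1)) - (1-d) ^ (-(n+1)) ≤ (2*A) ^ (n-m) * d ^ (-(m+1)) := by
      calc d ^ (-(n+1)) - (1-d) ^ (-(n+1)) ≤ D := hDge
        _ = (2*A) ^ (n-m) * N := hD_eq
        _ ≤ (2*A) ^ (n-m) * d ^ (-(m+1)) := by
            exact mul_le_mul_of_nonneg_left hNle haρ.le
    have h2 := mul_le_mul_of_nonneg_left h1 (Real.rpow_pos_of_pos hd0 (n+1)).le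
    calc 1 - g ^ (n+1)
        = d ^ (n+1) * (d ^ (-(n+1)) - (1-d) ^ (-(n+1))) := by
          rw [mul_sub, idT, ← gT]
      _ ≤ d ^ (n+1) * ((2*A) ^ (n-m) * d ^ (-(m+1))) := h2
      _ = d ^ (n-m) * (2*A) ^ (n-m) := by
          rw [← dρ1]; ring
      _ = (d * (2*A)) ^ (n-m) := hmulρ.symm
  -- (c): (d*(2A))^(n-m) * (1 - g^(m+1)) ≤ 1
  have hc : (d * (2*A)) ^ (n-m) * (1 - g ^ (m+1)) ≤ 1 := by
    have h1 : (2*A) ^ (n-m) * (d ^ (-(m+1)) - (1-d) ^ (-(m+1))) ≤ d ^ (-(n+1)) := by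
      calc (2*A) ^ (n-m) * (d ^ (-(m+1)) - (1-d) ^ (-(m+1)))
          ≤ (2*A) ^ (n-m) * N := mul_le_mul_of_nonneg_left hNge haρ.le
        _ = D := hD_eq.symm
        _ ≤ d ^ (-(n+1)) := hDle
    have h2 := mul_le_mul_of_nonneg_left h1 (Real.rpow_pos_of_pos hd0 (m+1)).le
    have h3 : d ^ (m+1) * ((2*A) ^ (n-m) * (d ^ (-(m+1)) - (1-d) ^ (-(m+1))))
        = (2*A) ^ (n-m) * (1 - g ^ (m+1)) := by
      rw [gS]
      linear_combination (2*A) ^ (n-m) * idS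
    rw [h3] at h2
    have h4 : d ^ (m+1) * d ^ (-(n+1)) = d ^ (-(n-m)) := by
      rw [mul_comm]; exact dρ2
    rw [h4] at h2
    have h5 := mul_le_mul_of_nonneg_left h2 (Real.rpow_pos_of_pos hd0 (n-m)).le
    calc (d * (2*A)) ^ (n-m) * (1 - g ^ (m+1))
        = d ^ (n-m) * ((2*A) ^ (n-m) * (1 - g ^ (m+1))) := by rw [hmulρ]; ring
      _ ≤ d ^ (n-m) * d ^ (-(n-m)) := h5
      _ = 1 := by rw [mul_comm]; exact idρ
  -- bounds on g powers
  have hgT1 : g ^ (n+1) ≤ 1 := Real.rpow_le_one hg0.le hg1 (by linarith)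
  have hgT0 : 0 ≤ g ^ (n+1) := (Real.rpow_pos_of_pos hg0 _).le
  have hgS0 : 0 ≤ g ^ (m+1) := (Real.rpow_pos_of_pos hg0 _).le
  have hgS12 : g ^ (m+1) ≤ 1/2 := by
    calc g ^ (m+1) ≤ g ^ (1:ℝ) :=
          Real.rpow_le_rpow_of_exponent_ge hg0 hg1 (by linarith)
      _ = g := Real.rpow_one g
      _ ≤ 1/2 := hg12
  have hgTd : g ^ (n+1) ≤ 2 ^ (n+1) * d ^ (n+1) := by
    calc g ^ (n+1) ≤ (2*d) ^ (n+1) := Real.rpow_le_rpow hg0.le hg2d (by linarith)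
      _ = 2 ^ (n+1) * d ^ (n+1) := Real.mul_rpow two_pos.le hd0.le
  have hgSd : g ^ (m+1) ≤ 2 ^ (m+1) * d ^ (m+1) := by
    calc g ^ (m+1) ≤ (2*d) ^ (m+1) := Real.rpow_le_rpow hg0.le hg2d (by linarith)
      _ = 2 ^ (m+1) * d ^ (m+1) := Real.mul_rpow two_pos.le hd0.le
  -- upper bound: 1 - d*(2A) ≤ q * g^(n+1)
  have hub : 1 - d * (2*A) ≤ q * g ^ (n+1) := by
    have h1 : (1 - g ^ (n+1)) ^ (n-m)⁻¹ ≤ d * (2*A) := by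
      rw [hdmA]
      exact Real.rpow_le_rpow (by linarith) hb hρinv.le
    have h2 := one_sub_rpow_le hgT0 hgT1 hρinv
    rw [← hq] at h2
    linarith
  -- lower bound: d*(2A) - 1 ≤ 2^(q+1) * g^(m+1)
  have hlb : d * (2*A) - 1 ≤ 2 ^ (q+1) * g ^ (m+1) := by
    have hgs : (0:ℝ) < 1 - g ^ (m+1) := by linarith
    have h1 : (d * (2*A)) ^ (n-m) ≤ (1 - g ^ (m+1))⁻¹ := by
      rw [← one_div, le_div_iff₀ hgs]; exact hc
    have h2 : d * (2*A) ≤ (1 - g ^ (m+1)) ^ (-(n-m)⁻¹) := by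
      rw [hdmA, Real.rpow_neg hgs.le, ← Real.inv_rpow hgs.le]
      exact Real.rpow_le_rpow (Real.rpow_nonneg hda0 _) h1 hρinv.le
    have h3 := inv_rpow_le hgS0 hgS12 hρinv
    rw [← hq] at h3
    linarith
  -- combine
  have e : 1/d - 2*A = (1 - d*(2*A))/d := by field_simp
  have hKn : 0 ≤ q * 2 ^ (n+1) := by positivity
  have hKm : (0:ℝ) ≤ (2:ℝ) ^ (q+1) * (2:ℝ) ^ (m+1) := by positivity
  have hdm0 : 0 ≤ d ^ m := (Real.rpow_pos_of_pos hd0 m).le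
  set K : ℝ := max (q * 2 ^ (n+1)) (2 ^ (q+1) * 2 ^ (m+1)) with hK
  have hup : 1/d - 2*A ≤ K * d ^ m := by
    rw [e, div_le_iff₀ hd0]
    calc 1 - d*(2*A) ≤ q * g ^ (n+1) := hub
      _ ≤ q * (2 ^ (n+1) * d ^ (n+1)) := by
          exact mul_le_mul_of_nonneg_left hgTd (by linarith)
      _ = q * 2 ^ (n+1) * d ^ (n+1) := by ring
      _ ≤ K * d ^ (n+1) := by
          exact mul_le_mul_of_nonneg_right (le_max_left _ _) (Real.rpow_pos_of_pos hd0 _).le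
      _ ≤ K * d ^ (m+1) := by
          refine mul_le_mul_of_nonneg_left hdnm (le_trans hKn (le_max_left _ _))
      _ = K * d ^ m * d := by rw [← hdm1]; ring
  have hdown : -(K * d ^ m) ≤ 1/d - 2*A := by
    rw [e, neg_le, ← neg_div, neg_sub, div_le_iff₀ hd0]
    calc d*(2*A) - 1 ≤ 2 ^ (q+1) * g ^ (m+1) := hlb
      _ ≤ 2 ^ (q+1) * (2 ^ (m+1) * d ^ (m+1)) := by
          exact mul_le_mul_of_nonneg_left hgSd (by positivity)
      _ = 2 ^ (q+1) * 2 ^ (m+1) * d ^ (m+1) := by ring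
      _ ≤ K * d ^ (m+1) := by
          exact mul_le_mul_of_nonneg_right (le_max_right _ _) (Real.rpow_pos_of_pos hd0 _).le
      _ = K * d ^ m * d := by rw [← hdm1]; ring
  exact abs_le.mpr ⟨hdown, hup⟩

/-- For `n > m > 1`, if `Δ : (A₀,∞) → (1,∞)` satisfies for all `A > A₀` the
stationarity equation
`A^{m−n} = 2^{n−m}·[ζ(m+1,1−δ(A)) − ζ(m+1,δ(A))]/[ζ(n+1,1−δ(A)) − ζ(n+1,δ(A))]` with
`δ(A) = 1/(1+Δ(A))`, then `δ(A) → 0` and `Δ(A) = 2A − 1 + o(1)` as `A → ∞`, i.e.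
`Δ(A) − 2A + 1 → 0`, regardless of the Lennard-Jones parameters `(n,m)`. -/
theorem bipartite_parameter_asymptotics
    (n m A₀ : ℝ) (hm : 1 < m) (hnm : m < n) (hA₀ : 0 < A₀)
    (Δ : ℝ → ℝ) (hΔ : ∀ A : ℝ, A₀ < A → 1 < Δ A)
    (heq : ∀ A : ℝ, A₀ < A →
      A ^ (m - n) = 2 ^ (n - m) *
        (hzeta (m + 1) (1 - 1 / (1 + Δ A)) - hzeta (m + 1) (1 / (1 + Δ A))) /
        (hzeta (n + 1) (1 - 1 / (1 + Δ A)) - hzeta (n + 1) (1 / (1 + Δ A)))) :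
    Tendsto (fun A : ℝ => 1 / (1 + Δ A)) atTop (nhds 0) ∧
    Tendsto (fun A : ℝ => Δ A - 2 * A + 1) atTop (nhds 0) := by
  have hρ : 0 < n - m := by linarith
  set C₁ : ℝ := ((n+1)/(m+1)) ^ (n-m)⁻¹ with hC₁
  set K : ℝ := max (max (n-m)⁻¹ 1 * 2 ^ (n+1)) (2 ^ (max (n-m)⁻¹ 1 + 1) * 2 ^ (m+1)) with hK
  have main : ∀ A : ℝ, A₀ < A →
      0 < 1/(1+Δ A) ∧ 1/(1+Δ A) * (2*A) ≤ C₁ ∧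
      (1/(1+Δ A) ≤ 1/3 → |Δ A - 2*A + 1| ≤ K * (1/(1+Δ A)) ^ m) := by
    intro A hA
    have hA0 : 0 < A := lt_trans hA₀ hA
    have hΔA := hΔ A hA
    set d : ℝ := 1/(1+Δ A) with hdd
    have h1Δ : (0:ℝ) < 1 + Δ A := by linarith
    have hd0 : 0 < d := by rw [hdd]; positivity
    have hdlt : d < 1/2 := by
      rw [hdd, div_lt_div_iff₀ h1Δ two_pos]; linarith
    -- derive hD_eq from heq
    have hN0 : 0 < hzeta (m+1) d - hzeta (m+1) (1-d) := D_pos (by linarith) hd0 hdlt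
    have hD0 : 0 < hzeta (n+1) d - hzeta (n+1) (1-d) := D_pos (by linarith) hd0 hdlt
    have heqA := heq A hA
    rw [show hzeta (m + 1) (1 - d) - hzeta (m + 1) d
        = -(hzeta (m+1) d - hzeta (m+1) (1-d)) by ring,
      show hzeta (n + 1) (1 - d) - hzeta (n + 1) d
        = -(hzeta (n+1) d - hzeta (n+1) (1-d)) by ring,
      mul_neg, neg_div_neg_eq] at heqA
    have h1 : 2 ^ (n-m) * (hzeta (m+1) d - hzeta (m+1) (1-d))
        = A ^ (m-n) * (hzeta (n+1) d - hzeta (n+1) (1-d)) :=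
      (div_eq_iff hD0.ne').mp heqA.symm
    have h2 : A ^ (n-m) * A ^ (m-n) = 1 := by
      rw [← Real.rpow_add hA0, show n - m + (m - n) = 0 by ring, Real.rpow_zero]
    have hD_eq : hzeta (n+1) d - hzeta (n+1) (1-d)
        = (2*A) ^ (n-m) * (hzeta (m+1) d - hzeta (m+1) (1-d)) := by
      calc hzeta (n+1) d - hzeta (n+1) (1-d)
          = A ^ (n-m) * A ^ (m-n) * (hzeta (n+1) d - hzeta (n+1) (1-d)) := by
            rw [h2, one_mul]
        _ = A ^ (n-m) * (A ^ (m-n) * (hzeta (n+1) d - hzeta (n+1) (1-d))) := by ring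
        _ = A ^ (n-m) * (2 ^ (n-m) * (hzeta (m+1) d - hzeta (m+1) (1-d))) := by
            rw [← h1]
        _ = (2*A) ^ (n-m) * (hzeta (m+1) d - hzeta (m+1) (1-d)) := by
            rw [Real.mul_rpow two_pos.le hA0.le]; ring
    have hcore := core n m A d hm hnm hA0 hd0 hdlt hD_eq
    refine ⟨hd0, hcore.1, fun h3 => ?_⟩
    have h4 := hcore.2 h3
    rwa [show (1:ℝ)/d - 2*A = Δ A - 2*A + 1 by rw [hdd, one_div_one_div]; ring] at h4
  -- part 1
  have hC₁0 : 0 < C₁ := Real.rpow_pos_of_pos (div_pos (by linarith) (by linarith)) _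
  have hbound : ∀ᶠ A in atTop, ‖1/(1+Δ A)‖ ≤ C₁/2 * A⁻¹ := by
    filter_upwards [eventually_gt_atTop A₀, eventually_gt_atTop 0] with A hA hA0
    obtain ⟨hd0, hda, _⟩ := main A hA
    rw [Real.norm_eq_abs, abs_of_pos hd0,
      show C₁/2 * A⁻¹ = C₁/(2*A) by field_simp]
    exact (le_div_iff₀ (by positivity)).mpr hda
  have htend : Tendsto (fun A : ℝ => C₁/2 * A⁻¹) atTop (nhds 0) := by
    simpa using tendsto_inv_atTop_zero.const_mul (C₁/2)
  have part1 : Tendsto (fun A : ℝ => 1 / (1 + Δ A)) atTop (nhds 0) :=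
    squeeze_zero_norm' hbound htend
  refine ⟨part1, ?_⟩
  have h13 : ∀ᶠ A in atTop, 1/(1+Δ A) ≤ 1/3 :=
    (part1.eventually_lt_const (by norm_num : (0:ℝ) < 1/3)).mono fun A h => le_of_lt h
  have hbound2 : ∀ᶠ A in atTop, ‖Δ A - 2*A + 1‖ ≤ K * (1/(1+Δ A)) ^ m := by
    filter_upwards [eventually_gt_atTop A₀, h13] with A hA h3
    obtain ⟨_, _, hb⟩ := main A hA
    rw [Real.norm_eq_abs]
    exact hb h3
  have htend2 : Tendsto (fun A : ℝ => K * (1/(1+Δ A)) ^ m) atTop (nhds 0) := by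
    have hcont : ContinuousAt (fun x : ℝ => x ^ m) 0 :=
      Real.continuousAt_rpow_const 0 m (Or.inr (by linarith))
    have hcomp := hcont.tendsto.comp part1
    rw [Real.zero_rpow (by linarith : m ≠ 0)] at hcomp
    simpa using hcomp.const_mul K
  exact squeeze_zero_norm' hbound2 htend2
end
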